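/- Let P(λ) = ∑_{k=0}^d λ^k P_k be a regular n×n matrix polynomial over a field F with even degree d = 2t (t ≥ 2) and invertible leading coefficient P_d, set Q(λ) := ∑_{k=0}^{d−1} λ^k P_k, and let λB+A be a pencil of size (t+1)n×(t+1)n with blocks M_{11}(λ) = −P_d, M_{12}(λ), M_{21}(λ), M_{22}(λ) satisfying M_{12}(λ)(Λ_{t−1}(λ)⊗I_n) = λ^t P_d, (Λ_{t−1}(λ)^T⊗I_n)M_{21}(λ) = λ^t P_d, and (Λ_{t−1}(λ)^T⊗I_n)M_{22}(λ)(Λ_{t−1}(λ)⊗I_n) = Q(λ). Let L(λ) be the associated modified block Kronecker pencil with parameter σ ∈ {1,−1}. Then for every λ0 ∈ F, every vector z ∈ F^{2tn} with L(λ0)z = 0 has the form z = [Λ_t(λ0)⊗I_n ; N̂_t(λ0)(λ0·B+A)(Λ_t(λ0)⊗I_n)]·x for some x ∈ F^n with P(λ0)x = 0. -/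

import Mathlib

open Polynomial Matrix
open scoped Kronecker

noncomputable section

/-- Entrywise inclusion of a constant matrix into polynomial matrices. -/
def matC {F : Type} [Field F] {m l : Type*} (M : Matrix m l F) : Matrix m l (Polynomial F) :=
  M.map fun a => (C a : Polynomial F)

/-- The pencil `λ ↦ A + λ B`, represented as a matrix over `F[λ]`. -/
def pencil {F : Type} [Field F] {m l : Type*} (A B : Matrix m l F) :
    Matrix m l (Polynomial F) :=
  matC A + (X : Polynomial F) • matC B

/-- Grade-`g` reversal `rev_g`, applied entrywise. -/
def revMat {F : Type} [Field F] {m l : Type*} (g : ℕ) (M : Matrix m l (Polynomial F)) :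
    Matrix m l (Polynomial F) :=
  M.map fun q => q.reflect g

/-- Entrywise evaluation of a polynomial matrix at a point. -/
def evalMat {F : Type} [Field F] {m l : Type*} (a : F) (M : Matrix m l (Polynomial F)) :
    Matrix m l F :=
  M.map fun q => q.eval a

/-- The matrix polynomial `P(λ) = ∑_{k=0}^d λ^k P_k` built from its coefficients. -/
def polyOfCoeffs {F : Type} [Field F] {n : ℕ} (d : ℕ) (Pc : ℕ → Matrix (Fin n) (Fin n) F) :
    Matrix (Fin n) (Fin n) (Polynomial F) :=
  ∑ k ∈ Finset.range (d + 1), (X : Polynomial F) ^ k • matC (Pc k)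

/-- The `(i,j)` block of a block-partitioned matrix. -/
def blk {α p q n m : Type*} (A : Matrix (p × n) (q × m) α) (i : p) (j : q) :
    Matrix n m α :=
  Matrix.of fun r c => A (i, r) (j, c)

/-- `Λ_s(λ) ⊗ I_n`, an `(s+1)n × n` polynomial matrix whose `i`-th block is `λ^{s-i} I_n`. -/
def Lam (F : Type) [Field F] (s n : ℕ) :
    Matrix (Fin (s+1) × Fin n) (Fin n) (Polynomial F) :=
  Matrix.of fun p c => if p.2 = c then (X : Polynomial F) ^ (s - (p.1 : ℕ)) else 0

/-- The pencil `L_s(λ) ∈ F[λ]^{s×(s+1)}` with `-1` on the diagonal and `λ` on the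
superdiagonal. -/
def Lpen (F : Type) [Field F] (s : ℕ) : Matrix (Fin s) (Fin (s+1)) (Polynomial F) :=
  Matrix.of fun i j =>
    if (j : ℕ) = (i : ℕ) then -1 else if (j : ℕ) = (i : ℕ) + 1 then X else 0

/-- The block Kronecker pencil `[[λB+A, L_s(λ)ᵀ⊗I_n],[σ L_s(λ)⊗I_n, 0]]` associated with a
pencil `M = λB+A` of size `(s+1)n × (s+1)n`. -/
def blockKron (F : Type) [Field F] (s n : ℕ) (σ : F)
    (M : Matrix (Fin (s+1) × Fin n) (Fin (s+1) × Fin n) (Polynomial F)) :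
    Matrix ((Fin (s+1) × Fin n) ⊕ (Fin s × Fin n)) ((Fin (s+1) × Fin n) ⊕ (Fin s × Fin n))
      (Polynomial F) :=
  Matrix.fromBlocks M (Lpen F s ⊗ₖ (1 : Matrix (Fin n) (Fin n) (Polynomial F)))ᵀ
    (σ • (Lpen F s ⊗ₖ (1 : Matrix (Fin n) (Fin n) (Polynomial F)))) 0

/-- `L` is a linearization of `P`: there are unimodular `U`, `V` with
`U L V = diag(I_m, P)` (up to the fixed identification of index sets). -/
def IsLinearization {F : Type} [Field F] (m : ℕ) {ι ρ : Type*} [Fintype ι] [DecidableEq ι]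
    [Fintype ρ] [DecidableEq ρ] (L : Matrix ι ι (Polynomial F))
    (P : Matrix ρ ρ (Polynomial F)) : Prop :=
  ∃ (e : (Fin m ⊕ ρ) ≃ ι) (U V : Matrix ι ι (Polynomial F)),
    IsUnit U.det ∧ IsUnit V.det ∧
      U * L * V =
        (Matrix.fromBlocks (1 : Matrix (Fin m) (Fin m) (Polynomial F)) 0 0 P).submatrix
          e.symm e.symm

/-- The block conditions `∑_{i+j=d+2-k} B_{ij} + ∑_{i+j=d+1-k} A_{ij} = P_k` for
`k = 0,…,d` (blocks are indexed here `0`-based, so `i+j` `1`-based is `i+j+2` `0`-based). -/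
def blockConds {F : Type} [Field F] {s n : ℕ} (d : ℕ) (Pc : ℕ → Matrix (Fin n) (Fin n) F)
    (A B : Matrix (Fin (s+1) × Fin n) (Fin (s+1) × Fin n) F) : Prop :=
  ∀ k, k ≤ d →
    (∑ p ∈ Finset.univ.filter
        (fun p : Fin (s+1) × Fin (s+1) => (p.1 : ℕ) + (p.2 : ℕ) + 2 + k = d + 2),
        blk B p.1 p.2) +
      (∑ p ∈ Finset.univ.filter
        (fun p : Fin (s+1) × Fin (s+1) => (p.1 : ℕ) + (p.2 : ℕ) + 2 + k = d + 1),
        blk A p.1 p.2) = Pc k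

/-- `L̂_t(λ) ⊗ I_n` (with `t = u+1`): first block column zero, remaining block columns
`L_{t-1}(λ) ⊗ I_n`; the column index is split as `Fin n ⊕ (Fin t × Fin n)`. -/
def LhatB (F : Type) [Field F] (u n : ℕ) :
    Matrix (Fin u × Fin n) (Fin n ⊕ Fin (u+1) × Fin n) (Polynomial F) :=
  Matrix.of fun p q =>
    match q with
    | Sum.inl _ => 0
    | Sum.inr c => (Lpen F u ⊗ₖ (1 : Matrix (Fin n) (Fin n) (Polynomial F))) p c

/-- The modified block Kronecker pencil `[[λB+A, L̂_t(λ)ᵀ⊗I_n],[σ L̂_t(λ)⊗I_n, 0]]`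
(with `t = u+1`). -/
def modBK (F : Type) [Field F] (u n : ℕ) (σ : F)
    (M : Matrix (Fin n ⊕ Fin (u+1) × Fin n) (Fin n ⊕ Fin (u+1) × Fin n) (Polynomial F)) :
    Matrix ((Fin n ⊕ Fin (u+1) × Fin n) ⊕ Fin u × Fin n)
      ((Fin n ⊕ Fin (u+1) × Fin n) ⊕ Fin u × Fin n) (Polynomial F) :=
  Matrix.fromBlocks M (LhatB F u n)ᵀ (σ • LhatB F u n) 0

/-- `Λ̂_t(λ) ⊗ I_n` (with `t = u+1`): the `(t+1)n × 2n` polynomial matrix whose transpose has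
block rows `(I_n, 0, …, 0)` and `(0, λ^{t-1}I_n, …, λ I_n, I_n)`. -/
def LamHatB (F : Type) [Field F] (u n : ℕ) :
    Matrix (Fin n ⊕ Fin (u+1) × Fin n) (Fin 2 × Fin n) (Polynomial F) :=
  Matrix.of fun q c =>
    match q with
    | Sum.inl r => if c.1 = 0 ∧ c.2 = r then 1 else 0
    | Sum.inr p => if c.1 = 1 ∧ c.2 = p.2 then (X : Polynomial F) ^ (u - (p.1 : ℕ)) else 0

/-- `Λ̃_t(λ) ⊗ I_n` (with `t = u+1`): the `(t+1)n × 2n` polynomial matrix whose transpose has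
block rows `(I_n, 0, …, 0)` and `(0, I_n, λ I_n, …, λ^{t-1} I_n)`. -/
def LamTildeB (F : Type) [Field F] (u n : ℕ) :
    Matrix (Fin n ⊕ Fin (u+1) × Fin n) (Fin 2 × Fin n) (Polynomial F) :=
  Matrix.of fun q c =>
    match q with
    | Sum.inl r => if c.1 = 0 ∧ c.2 = r then 1 else 0
    | Sum.inr p => if c.1 = 1 ∧ c.2 = p.2 then (X : Polynomial F) ^ (p.1 : ℕ) else 0

/-- A `2n × 2n` matrix assembled from four `n × n` blocks, indexed by `Fin 2 × Fin n`. -/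
def twoBlock {α : Type*} {n : ℕ} (W₁₁ W₁₂ W₂₁ W₂₂ : Matrix (Fin n) (Fin n) α) :
    Matrix (Fin 2 × Fin n) (Fin 2 × Fin n) α :=
  Matrix.of fun p q =>
    if p.1 = 0 then (if q.1 = 0 then W₁₁ p.2 q.2 else W₁₂ p.2 q.2)
    else (if q.1 = 0 then W₂₁ p.2 q.2 else W₂₂ p.2 q.2)

/-- `Λ_t(λ) ⊗ I_n` (with `t = u+1`), over the split row index `Fin n ⊕ (Fin t × Fin n)`:
block entries `λ^t I_n, λ^{t-1} I_n, …, λ I_n, I_n`. -/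
def LamFullB (F : Type) [Field F] (u n : ℕ) :
    Matrix (Fin n ⊕ Fin (u+1) × Fin n) (Fin n) (Polynomial F) :=
  Matrix.of fun q c =>
    match q with
    | Sum.inl r => if r = c then (X : Polynomial F) ^ (u + 1) else 0
    | Sum.inr p => if p.2 = c then (X : Polynomial F) ^ (u - (p.1 : ℕ)) else 0

/-- `N̂_t(λ) = Ĥ_t(λ) ⊗ I_n` (with `t = u+1`): `Ĥ_t ∈ F[λ]^{(t-1)×(t+1)}` has `(i,j)` entry
`λ^{i+1-j}` if `2 ≤ j ≤ i+1` and `0` otherwise. -/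
def NhatB (F : Type) [Field F] (u n : ℕ) :
    Matrix (Fin u × Fin n) (Fin n ⊕ Fin (u+1) × Fin n) (Polynomial F) :=
  Matrix.of fun p q =>
    match q with
    | Sum.inl _ => 0
    | Sum.inr c =>
        if (c.1 : ℕ) ≤ (p.1 : ℕ) ∧ p.2 = c.2 then
          (X : Polynomial F) ^ ((p.1 : ℕ) - (c.1 : ℕ)) else 0

end

noncomputable section
section Aux
variable {F : Type} [Field F]

lemma evalMat_mul {m l k : Type*} [Fintype l] (a : F) (M : Matrix m l F[X]) (N : Matrix l k F[X]) :
    evalMat a (M * N) = evalMat a M * evalMat a N := by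
  ext i j
  simp [evalMat, Matrix.mul_apply, Polynomial.eval_finset_sum]

lemma evalMat_smul (a : F) {m l : Type*} (p : F[X]) (M : Matrix m l F[X]) :
    evalMat a (p • M) = p.eval a • evalMat a M := by
  ext i j; simp [evalMat, Matrix.smul_apply, smul_eq_mul]

lemma evalMat_smulF (a : F) {m l : Type*} (c : F) (M : Matrix m l F[X]) :
    evalMat a (c • M) = c • evalMat a M := by
  ext i j; simp [evalMat, Matrix.smul_apply]

lemma evalMat_matC {m l : Type*} (a : F) (M : Matrix m l F) : evalMat a (matC M) = M := by
  ext i j; simp [evalMat, matC]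

lemma evalMat_neg {m l : Type*} (a : F) (M : Matrix m l F[X]) :
    evalMat a (-M) = -evalMat a M := by
  ext i j; simp [evalMat]

lemma evalMat_transpose {m l : Type*} (a : F) (M : Matrix m l F[X]) :
    evalMat a Mᵀ = (evalMat a M)ᵀ := rfl

lemma evalMat_one {m : Type*} [Fintype m] [DecidableEq m] (a : F) :
    evalMat a (1 : Matrix m m F[X]) = 1 := by
  ext i j; by_cases h : i = j <;> simp [evalMat, Matrix.one_apply, h]

lemma evalMat_zero {m l : Type*} (a : F) : evalMat a (0 : Matrix m l F[X]) = 0 := by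
  ext i j; simp [evalMat]

lemma evalMat_sum {m l ι : Type*} (a : F) (s : Finset ι) (f : ι → Matrix m l F[X]) :
    evalMat a (∑ k ∈ s, f k) = ∑ k ∈ s, evalMat a (f k) := by
  ext i j
  simp [evalMat, Matrix.sum_apply, Polynomial.eval_finset_sum]

lemma evalMat_kronecker {m l m' l' : Type*} (a : F) (M : Matrix m l F[X]) (N : Matrix m' l' F[X]) :
    evalMat a (M ⊗ₖ N) = evalMat a M ⊗ₖ evalMat a N := by
  ext ⟨i, i'⟩ ⟨j, j'⟩; simp [evalMat, Matrix.kroneckerMap_apply]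

lemma evalMat_fromBlocks {m l m' l' : Type*} (a : F) (A : Matrix m l F[X]) (B : Matrix m l' F[X])
    (C : Matrix m' l F[X]) (D : Matrix m' l' F[X]) :
    evalMat a (Matrix.fromBlocks A B C D) =
      Matrix.fromBlocks (evalMat a A) (evalMat a B) (evalMat a C) (evalMat a D) := by
  ext (i | i) (j | j) <;> rfl

lemma evalMat_fromRows {m m' l : Type*} (a : F) (A : Matrix m l F[X]) (B : Matrix m' l F[X]) :
    evalMat a (Matrix.fromRows A B) = Matrix.fromRows (evalMat a A) (evalMat a B) := by
  ext (i | i) j <;> rfl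

lemma evalMat_fromCols {m l l' : Type*} (a : F) (A : Matrix m l F[X]) (B : Matrix m l' F[X]) :
    evalMat a (Matrix.fromCols A B) = Matrix.fromCols (evalMat a A) (evalMat a B) := by
  ext i (j | j) <;> rfl

lemma evalMat_toBlocks₁₁ {m l m' l' : Type*} (a : F) (M : Matrix (m ⊕ m') (l ⊕ l') F[X]) :
    (evalMat a M).toBlocks₁₁ = evalMat a M.toBlocks₁₁ := rfl

lemma evalMat_toBlocks₁₂ {m l m' l' : Type*} (a : F) (M : Matrix (m ⊕ m') (l ⊕ l') F[X]) :
    (evalMat a M).toBlocks₁₂ = evalMat a M.toBlocks₁₂ := rfl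

lemma evalMat_toBlocks₂₁ {m l m' l' : Type*} (a : F) (M : Matrix (m ⊕ m') (l ⊕ l') F[X]) :
    (evalMat a M).toBlocks₂₁ = evalMat a M.toBlocks₂₁ := rfl

lemma evalMat_toBlocks₂₂ {m l m' l' : Type*} (a : F) (M : Matrix (m ⊕ m') (l ⊕ l') F[X]) :
    (evalMat a M).toBlocks₂₂ = evalMat a M.toBlocks₂₂ := rfl

lemma sum_ite_coe {α : Type*} [AddCommMonoid α] {m : ℕ} (k : ℕ) (g : Fin m → α) :
    ∑ i : Fin m, (if (i : ℕ) = k then g i else 0) = if h : k < m then g ⟨k, h⟩ else 0 := by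
  split_ifs with h
  · rw [Finset.sum_eq_single ⟨k, h⟩]
    · simp
    · intro b _ hb
      exact if_neg fun hh => hb (Fin.ext hh)
    · simp
  · exact Finset.sum_eq_zero fun i _ => if_neg (by omega)

end Aux
section Aux2
variable {F : Type} [Field F]

def Lp0 (a : F) (u : ℕ) : Matrix (Fin u) (Fin (u+1)) F :=
  Matrix.of fun i j =>
    if (j : ℕ) = (i : ℕ) then -1 else if (j : ℕ) = (i : ℕ) + 1 then a else 0

def H0 (a : F) (u : ℕ) : Matrix (Fin u) (Fin (u+1)) F :=
  Matrix.of fun i j => if (j : ℕ) ≤ (i : ℕ) then a ^ ((i : ℕ) - (j : ℕ)) else 0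

def Lam0 (a : F) (u n : ℕ) : Matrix (Fin (u+1) × Fin n) (Fin n) F :=
  Matrix.of fun p c => if p.2 = c then a ^ (u - (p.1 : ℕ)) else 0

def EE0 (a : F) (u : ℕ) : Matrix (Fin (u+1)) (Fin (u+1)) F :=
  Matrix.of fun j c => if (j : ℕ) = u then a ^ (u - (c : ℕ)) else 0

def EU0 (F : Type) [Field F] (u n : ℕ) : Matrix (Fin (u+1) × Fin n) (Fin n) F :=
  Matrix.of fun p c => if (p.1 : ℕ) = u ∧ p.2 = c then 1 else 0

def Hpen (F : Type) [Field F] (u : ℕ) : Matrix (Fin u) (Fin (u+1)) F[X] :=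
  Matrix.of fun i j => if (j : ℕ) ≤ (i : ℕ) then (X : F[X]) ^ ((i : ℕ) - (j : ℕ)) else 0

lemma evalMat_Lpen (a : F) (u : ℕ) : evalMat a (Lpen F u) = Lp0 a u := by
  ext i j
  simp only [evalMat, Matrix.map_apply, Lpen, Lp0, Matrix.of_apply]
  split_ifs <;> simp

lemma evalMat_Hpen (a : F) (u : ℕ) : evalMat a (Hpen F u) = H0 a u := by
  ext i j
  simp only [evalMat, Matrix.map_apply, Hpen, H0, Matrix.of_apply]
  split_ifs <;> simp

lemma evalMat_Lam (a : F) (u n : ℕ) : evalMat a (Lam F u n) = Lam0 a u n := by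
  ext p c
  simp only [evalMat, Matrix.map_apply, Lam, Lam0, Matrix.of_apply]
  split_ifs <;> simp

lemma LhatB_eq (u n : ℕ) :
    LhatB F u n = Matrix.fromCols 0
      (Lpen F u ⊗ₖ (1 : Matrix (Fin n) (Fin n) F[X])) := by
  ext p q
  cases q <;> rfl

lemma NhatB_eq (u n : ℕ) :
    NhatB F u n = Matrix.fromCols 0
      (Hpen F u ⊗ₖ (1 : Matrix (Fin n) (Fin n) F[X])) := by
  ext p q
  cases q with
  | inl r => rfl
  | inr c =>
      simp only [NhatB, Matrix.of_apply, Matrix.fromCols_apply_inr,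
        Matrix.kroneckerMap_apply, Hpen, Matrix.one_apply]
      by_cases h1 : (c.1 : ℕ) ≤ (p.1 : ℕ) <;> by_cases h2 : p.2 = c.2 <;>
        simp [h1, h2]

lemma LamFullB_eq (u n : ℕ) :
    LamFullB F u n = Matrix.fromRows
      ((X : F[X]) ^ (u+1) • (1 : Matrix (Fin n) (Fin n) F[X])) (Lam F u n) := by
  ext q c
  cases q with
  | inl r =>
      simp only [LamFullB, Matrix.of_apply, Matrix.fromRows_apply_inl,
        Matrix.smul_apply, Matrix.one_apply, smul_eq_mul]
      by_cases h : r = c <;> simp [h]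
  | inr p => rfl

lemma Lp0_row_sum {α : Type*} [Ring α] (a : α) {u : ℕ} (i : Fin u) (f : Fin (u+1) → α) :
    ∑ j : Fin (u+1),
      (if (j : ℕ) = (i : ℕ) then (-1 : α) else if (j : ℕ) = (i : ℕ) + 1 then a else 0) * f j
      = -f i.castSucc + a * f i.succ := by
  have hstep : ∀ j : Fin (u+1),
      (if (j : ℕ) = (i : ℕ) then (-1 : α) else if (j : ℕ) = (i : ℕ) + 1 then a else 0) * f j =
        (if (j : ℕ) = (i : ℕ) then -f j else 0) +
          (if (j : ℕ) = (i : ℕ) + 1 then a * f j else 0) := by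
    intro j
    by_cases h1 : (j : ℕ) = (i : ℕ)
    · rw [if_pos h1, if_pos h1, if_neg (by omega), add_zero, neg_one_mul]
    · rw [if_neg h1, if_neg h1, zero_add]
      by_cases h2 : (j : ℕ) = (i : ℕ) + 1
      · rw [if_pos h2, if_pos h2]
      · rw [if_neg h2, if_neg h2, zero_mul]
  rw [Finset.sum_congr rfl fun j _ => hstep j, Finset.sum_add_distrib,
    sum_ite_coe (i : ℕ) (fun j => -f j), sum_ite_coe ((i : ℕ) + 1) (fun j => a * f j),
    dif_pos (by omega : (i : ℕ) < u + 1), dif_pos (by omega : (i : ℕ) + 1 < u + 1)]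
  rfl

lemma Lp0_col_sum {α : Type*} [Ring α] (a : α) {u : ℕ} (j : Fin (u+1)) (f : Fin u → α) :
    ∑ i : Fin u,
      (if (j : ℕ) = (i : ℕ) then (-1 : α) else if (j : ℕ) = (i : ℕ) + 1 then a else 0) * f i =
      (if h : (j : ℕ) < u then -f ⟨(j : ℕ), h⟩ else 0) +
        (if h : 1 ≤ (j : ℕ) then a * f ⟨(j : ℕ) - 1, by omega⟩ else 0) := by
  have hstep : ∀ i : Fin u,
      (if (j : ℕ) = (i : ℕ) then (-1 : α) else if (j : ℕ) = (i : ℕ) + 1 then a else 0) * f i =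
        (if (i : ℕ) = (j : ℕ) then -f i else 0) +
          (if 1 ≤ (j : ℕ) then (if (i : ℕ) = (j : ℕ) - 1 then a * f i else 0) else 0) := by
    intro i
    by_cases h1 : (j : ℕ) = (i : ℕ)
    · rw [if_pos h1, if_pos h1.symm]
      have h2 : (if 1 ≤ (j : ℕ) then (if (i : ℕ) = (j : ℕ) - 1 then a * f i else 0) else 0)
          = 0 := by
        split_ifs with ha hb
        · exact absurd hb (by omega)
        · rfl
        · rfl
      rw [h2, add_zero, neg_one_mul]
    · rw [if_neg h1, if_neg (fun hh : (i : ℕ) = (j : ℕ) => h1 hh.symm), zero_add]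
      by_cases h2 : (j : ℕ) = (i : ℕ) + 1
      · rw [if_pos h2, if_pos (by omega), if_pos (by omega)]
      · rw [if_neg h2]
        have h3 : (if 1 ≤ (j : ℕ) then (if (i : ℕ) = (j : ℕ) - 1 then a * f i else 0) else 0)
            = 0 := by
          split_ifs with ha hb
          · exact absurd (by omega : (j : ℕ) = (i : ℕ) + 1) h2
          · rfl
          · rfl
        rw [h3, zero_mul]
  rw [Finset.sum_congr rfl fun i _ => hstep i, Finset.sum_add_distrib,
    sum_ite_coe (j : ℕ) (fun i => -f i)]
  by_cases h3 : 1 ≤ (j : ℕ)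
  · simp only [if_pos h3, dif_pos h3]
    rw [sum_ite_coe ((j : ℕ) - 1) (fun i => a * f i),
      dif_pos (by omega : (j : ℕ) - 1 < u)]
  · simp only [if_neg h3, dif_neg h3]
    simp

end Aux2
section Aux3
variable {F : Type} [Field F]

lemma sum_pick_left {n : ℕ} (r : Fin n) (g : Fin n → F) :
    ∑ s : Fin n, (if r = s then g s else 0) = g r := by
  rw [Finset.sum_eq_single r]
  · simp
  · intro b _ hb; exact if_neg fun hh => hb hh.symm
  · simp

lemma sum_pick_right {n : ℕ} (c : Fin n) (g : Fin n → F) :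
    ∑ s : Fin n, (if s = c then g s else 0) = g c := by
  rw [Finset.sum_eq_single c]
  · simp
  · intro b _ hb; exact if_neg hb
  · simp

lemma kron_one_mulVec {p q : Type*} [Fintype q] {n : ℕ} (A : Matrix p q F)
    (v : q × Fin n → F) (i : p) (r : Fin n) :
    ((A ⊗ₖ (1 : Matrix (Fin n) (Fin n) F)).mulVec v) (i, r) = ∑ j, A i j * v (j, r) := by
  simp only [Matrix.mulVec, dotProduct, Fintype.sum_prod_type]
  refine Finset.sum_congr rfl fun j _ => ?_
  refine (Finset.sum_congr rfl fun s _ => ?_).trans (sum_pick_left r (fun s => A i j * v (j, s)))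
  simp only [Matrix.kroneckerMap_apply, Matrix.one_apply]
  split_ifs <;> ring

lemma kron_one_transpose_mulVec {p q : Type*} [Fintype p] {n : ℕ} (A : Matrix p q F)
    (v : p × Fin n → F) (j : q) (c : Fin n) :
    (((A ⊗ₖ (1 : Matrix (Fin n) (Fin n) F))ᵀ).mulVec v) (j, c) = ∑ i, A i j * v (i, c) := by
  simp only [Matrix.mulVec, dotProduct, Fintype.sum_prod_type]
  refine Finset.sum_congr rfl fun i _ => ?_
  refine (Finset.sum_congr rfl fun s _ => ?_).trans (sum_pick_right c (fun s => A i j * v (i, s)))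
  simp only [Matrix.transpose_apply, Matrix.kroneckerMap_apply, Matrix.one_apply]
  split_ifs <;> ring

lemma Lp0_kron_mul_Lam0 (a : F) (u n : ℕ) :
    (Lp0 a u ⊗ₖ (1 : Matrix (Fin n) (Fin n) F)) * Lam0 a u n = 0 := by
  ext ⟨i, r⟩ c
  rw [Matrix.mul_apply, Fintype.sum_prod_type]
  have hin : ∀ j : Fin (u+1),
      (∑ s : Fin n, (Lp0 a u ⊗ₖ (1 : Matrix (Fin n) (Fin n) F)) (i, r) (j, s)
          * Lam0 a u n (j, s) c) =
        Lp0 a u i j * (if r = c then a ^ (u - (j:ℕ)) else 0) := by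
    intro j
    refine (Finset.sum_congr rfl fun s _ => ?_).trans
      (sum_pick_left r (fun s => Lp0 a u i j * (if s = c then a ^ (u - (j:ℕ)) else 0)))
    simp only [Matrix.kroneckerMap_apply, Matrix.one_apply, Lam0, Matrix.of_apply]
    split_ifs <;> ring
  rw [Finset.sum_congr rfl fun j _ => hin j]
  simp only [Lp0, Matrix.of_apply]
  rw [Lp0_row_sum a i (fun j => if r = c then a ^ (u - (j:ℕ)) else 0)]
  by_cases hrc : r = c
  · simp only [if_pos hrc, Fin.coe_castSucc, Fin.val_succ]
    have hp : a * a ^ (u - ((i:ℕ) + 1)) = a ^ (u - (i:ℕ)) := by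
      rw [← pow_succ']
      congr 1
      omega
    rw [hp]
    simp
  · simp [hrc]

lemma Lp0T_mul_H0 (a : F) {u : ℕ} (hu : 1 ≤ u) :
    (Lp0 a u)ᵀ * H0 a u = -1 + EE0 a u := by
  ext j c
  rw [Matrix.mul_apply]
  simp only [Matrix.transpose_apply, Lp0, Matrix.of_apply]
  rw [Lp0_col_sum a j (fun i => H0 a u i c)]
  simp only [H0, EE0, Matrix.of_apply, Matrix.add_apply, Matrix.neg_apply, Matrix.one_apply]
  by_cases hju : (j : ℕ) < u
  · rw [dif_pos hju, if_neg (by omega : ¬ (j:ℕ) = u)]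
    by_cases h1 : 1 ≤ (j : ℕ)
    · rw [dif_pos h1]
      by_cases hcj : (c : ℕ) ≤ (j : ℕ) - 1
      · have hne : ¬ j = c := fun h => by
          have := congrArg Fin.val h; omega
        rw [if_pos (by omega : (c:ℕ) ≤ (j:ℕ)), if_pos hcj, if_neg hne]
        have hp : a * a ^ ((j:ℕ) - 1 - (c:ℕ)) = a ^ ((j:ℕ) - (c:ℕ)) := by
          rw [← pow_succ']; congr 1; omega
        rw [hp]; ring
      · by_cases hcj2 : (c : ℕ) ≤ (j : ℕ)
        · have hce : (j:ℕ) = (c:ℕ) := by omega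
          rw [if_pos hcj2, if_neg hcj, if_pos (Fin.ext hce : j = c)]
          have : (j:ℕ) - (c:ℕ) = 0 := by omega
          rw [this]; simp
        · rw [if_neg hcj2, if_neg hcj,
            if_neg (fun h => hcj2 (le_of_eq (congrArg Fin.val h).symm))]
          simp
    · rw [dif_neg h1]
      by_cases hcj : (c : ℕ) ≤ (j : ℕ)
      · have hce : (j:ℕ) = (c:ℕ) := by omega
        rw [if_pos hcj, if_pos (Fin.ext hce : j = c)]
        have : (j:ℕ) - (c:ℕ) = 0 := by omega
        rw [this]; simp
      · rw [if_neg hcj, if_neg (fun h => hcj (le_of_eq (congrArg Fin.val h).symm))]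
        try simp
  · have hju' : (j : ℕ) = u := by omega
    rw [dif_neg hju, dif_pos (by omega : 1 ≤ (j:ℕ)), if_pos hju']
    by_cases hcu : (c : ℕ) ≤ (j : ℕ) - 1
    · have hne : ¬ j = c := fun h => by
        have := congrArg Fin.val h; omega
      rw [if_pos hcu, if_neg hne]
      have hp : a * a ^ ((j:ℕ) - 1 - (c:ℕ)) = a ^ (u - (c:ℕ)) := by
        rw [← pow_succ']; congr 1; omega
      rw [hp]; ring
    · have hce : (j:ℕ) = (c:ℕ) := by omega
      rw [if_neg hcu, if_pos (Fin.ext hce : j = c)]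
      have : u - (c:ℕ) = 0 := by omega
      rw [this]; simp

lemma EE0_kron (a : F) (u n : ℕ) :
    (EE0 a u ⊗ₖ (1 : Matrix (Fin n) (Fin n) F)) = EU0 F u n * (Lam0 a u n)ᵀ := by
  ext ⟨j, r⟩ ⟨j', c⟩
  rw [Matrix.mul_apply]
  simp only [Matrix.kroneckerMap_apply, EE0, EU0, Lam0, Matrix.of_apply,
    Matrix.transpose_apply, Matrix.one_apply]
  have : ∀ s : Fin n,
      (if (j:ℕ) = u ∧ r = s then (1:F) else 0) * (if c = s then a ^ (u - (j':ℕ)) else 0) =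
        if r = s then (if (j:ℕ) = u then (1:F) else 0) *
          (if c = s then a ^ (u - (j':ℕ)) else 0) else 0 := by
    intro s
    by_cases h1 : (j:ℕ) = u <;> by_cases h2 : r = s <;> simp [h1, h2]
  rw [Finset.sum_congr rfl fun s _ => this s,
    sum_pick_left r (fun s => (if (j:ℕ) = u then (1:F) else 0) *
      (if c = s then a ^ (u - (j':ℕ)) else 0))]
  by_cases h1 : (j:ℕ) = u
  · by_cases h2 : r = c
    · subst h2; simp [h1]
    · rw [if_pos h1, if_pos h1, if_neg h2, if_neg (fun h : c = r => h2 h.symm)]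
      ring
  · simp [h1]

end Aux3
section Aux4
variable {F : Type} [Field F]

lemma Lam0_mulVec (a : F) (u n : ℕ) (x : Fin n → F) (p : Fin (u+1) × Fin n) :
    (Lam0 a u n).mulVec x p = a ^ (u - (p.1 : ℕ)) * x p.2 := by
  simp only [Matrix.mulVec, dotProduct, Lam0, Matrix.of_apply, ite_mul, zero_mul]
  exact sum_pick_left p.2 (fun c => a ^ (u - (p.1 : ℕ)) * x c)

lemma neg_kron {p q p' q' : Type*} (A : Matrix p q F) (B : Matrix p' q' F) :
    (-A) ⊗ₖ B = -(A ⊗ₖ B) := by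
  ext ⟨i, j⟩ ⟨k, l⟩
  simp [Matrix.kroneckerMap_apply]

lemma fromRows_add {m₁ m₂ l : Type*} (A C : Matrix m₁ l F) (B D : Matrix m₂ l F) :
    Matrix.fromRows A B + Matrix.fromRows C D = Matrix.fromRows (A + C) (B + D) := by
  ext i j
  cases i <;> simp [Matrix.fromRows_apply_inl, Matrix.fromRows_apply_inr]

end Aux4
end
/-- (`t = u+1 ≥ 2`, `d = 2t`, `P_d` invertible, `P` regular.) Every
vector in the kernel of `L(λ0)` has the form
`[Λ_t(λ0)⊗I_n ; N̂_t(λ0)(λ0 B+A)(Λ_t(λ0)⊗I_n)]·x` for some `x` with `P(λ0)x = 0`. -/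
theorem stmt_17 {F : Type} [Field F] (n u : ℕ) (hn : 0 < n) (hu : 1 ≤ u)
    (Pc : ℕ → Matrix (Fin n) (Fin n) F)
    (hPd : IsUnit (Pc (2*(u+1))).det)
    (hreg : (polyOfCoeffs (2*(u+1)) Pc).det ≠ 0)
    (σ : F) (hσ : σ = 1 ∨ σ = -1)
    (A B : Matrix (Fin n ⊕ Fin (u+1) × Fin n) (Fin n ⊕ Fin (u+1) × Fin n) F)
    (h11 : (pencil A B).toBlocks₁₁ = -(matC (Pc (2*(u+1)))))
    (h12 : (pencil A B).toBlocks₁₂ * Lam F u n =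
      (X : Polynomial F) ^ (u+1) • matC (Pc (2*(u+1))))
    (h21 : (Lam F u n)ᵀ * (pencil A B).toBlocks₂₁ =
      (X : Polynomial F) ^ (u+1) • matC (Pc (2*(u+1))))
    (h22 : (Lam F u n)ᵀ * (pencil A B).toBlocks₂₂ * Lam F u n =
      ∑ k ∈ Finset.range (2*(u+1)), (X : Polynomial F) ^ k • matC (Pc k)) :
    ∀ lam0 : F, ∀ z : ((Fin n ⊕ Fin (u+1) × Fin n) ⊕ Fin u × Fin n) → F,
      (evalMat lam0 (modBK F u n σ (pencil A B))).mulVec z = 0 →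
        ∃ x : Fin n → F,
          (evalMat lam0 (polyOfCoeffs (2*(u+1)) Pc)).mulVec x = 0 ∧
            z = (evalMat lam0 (Matrix.fromRows (LamFullB F u n)
              (NhatB F u n * pencil A B * LamFullB F u n))).mulVec x := by
  intro lam0 z hz
  have hσ0 : σ ≠ 0 := by rcases hσ with h | h <;> simp [h]
  -- evaluated hypotheses
  have h11e : (evalMat lam0 (pencil A B)).toBlocks₁₁ = -(Pc (2*(u+1))) := by
    rw [evalMat_toBlocks₁₁, h11, evalMat_neg, evalMat_matC]
  have h12e : (evalMat lam0 (pencil A B)).toBlocks₁₂ * Lam0 lam0 u n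
      = lam0 ^ (u+1) • Pc (2*(u+1)) := by
    have h := congrArg (evalMat lam0) h12
    rw [evalMat_mul, evalMat_Lam, evalMat_smul, evalMat_matC, ← evalMat_toBlocks₁₂] at h
    simpa using h
  have h21e : (Lam0 lam0 u n)ᵀ * (evalMat lam0 (pencil A B)).toBlocks₂₁
      = lam0 ^ (u+1) • Pc (2*(u+1)) := by
    have h := congrArg (evalMat lam0) h21
    rw [evalMat_mul, evalMat_transpose, evalMat_Lam, evalMat_smul, evalMat_matC,
      ← evalMat_toBlocks₂₁] at h
    simpa using h
  have h22e : (Lam0 lam0 u n)ᵀ * (evalMat lam0 (pencil A B)).toBlocks₂₂ * Lam0 lam0 u n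
      = ∑ k ∈ Finset.range (2*(u+1)), lam0 ^ k • Pc k := by
    have h := congrArg (evalMat lam0) h22
    rw [evalMat_mul, evalMat_mul, evalMat_transpose, evalMat_Lam, ← evalMat_toBlocks₂₂,
      evalMat_sum] at h
    simp only [evalMat_smul, evalMat_matC, eval_pow, eval_X] at h
    exact h
  have hP0 : evalMat lam0 (polyOfCoeffs (2*(u+1)) Pc) =
      (∑ k ∈ Finset.range (2*(u+1)), lam0 ^ k • Pc k) + lam0 ^ (2*(u+1)) • Pc (2*(u+1)) := by
    rw [polyOfCoeffs, evalMat_sum, Finset.sum_range_succ]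
    simp only [evalMat_smul, evalMat_matC, eval_pow, eval_X]
  have hM0 : evalMat lam0 (pencil A B) =
      Matrix.fromBlocks (evalMat lam0 (pencil A B)).toBlocks₁₁
        (evalMat lam0 (pencil A B)).toBlocks₁₂ (evalMat lam0 (pencil A B)).toBlocks₂₁
        (evalMat lam0 (pencil A B)).toBlocks₂₂ := (Matrix.fromBlocks_toBlocks _).symm
  have htt : (u+1) + (u+1) = 2*(u+1) := by ring
  -- Lemma A evaluated
  have hLemA : (Matrix.fromRows (lam0 ^ (u+1) • (1 : Matrix (Fin n) (Fin n) F))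
        (Lam0 lam0 u n))ᵀ * evalMat lam0 (pencil A B) *
        Matrix.fromRows (lam0 ^ (u+1) • (1 : Matrix (Fin n) (Fin n) F)) (Lam0 lam0 u n)
      = evalMat lam0 (polyOfCoeffs (2*(u+1)) Pc) := by
    rw [Matrix.transpose_fromRows, Matrix.transpose_smul, Matrix.transpose_one]
    conv_lhs => rw [hM0]
    rw [Matrix.fromCols_mul_fromBlocks, Matrix.fromCols_mul_fromRows, hP0]
    rw [h11e]
    simp only [Matrix.smul_mul, Matrix.mul_smul, Matrix.one_mul, Matrix.mul_one,
      Matrix.add_mul]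
    rw [h12e, h21e, h22e]
    simp only [smul_smul, smul_neg, ← pow_add, htt, smul_zero]
    abel_nf
    simp
  -- Lh0 * Λf0 = 0
  have hLhΛf : Matrix.fromCols (0 : Matrix (Fin u × Fin n) (Fin n) F)
        (Lp0 lam0 u ⊗ₖ (1 : Matrix (Fin n) (Fin n) F)) *
        Matrix.fromRows (lam0 ^ (u+1) • (1 : Matrix (Fin n) (Fin n) F)) (Lam0 lam0 u n)
      = 0 := by
    rw [Matrix.fromCols_mul_fromRows, Matrix.zero_mul, Lp0_kron_mul_Lam0, zero_add]
  -- Lemma B1 evaluated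
  have hMV : evalMat lam0 (pencil A B) *
      Matrix.fromRows (lam0 ^ (u+1) • (1 : Matrix (Fin n) (Fin n) F)) (Lam0 lam0 u n) =
      Matrix.fromRows 0 ((evalMat lam0 (pencil A B)).toBlocks₂₁ *
          (lam0 ^ (u+1) • (1 : Matrix (Fin n) (Fin n) F)) +
        (evalMat lam0 (pencil A B)).toBlocks₂₂ * Lam0 lam0 u n) := by
    conv_lhs => rw [hM0]
    rw [Matrix.fromBlocks_mul_fromRows]
    congr 1
    rw [h11e, h12e, Matrix.mul_smul, Matrix.mul_one]
    simp [smul_neg]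
  -- Lemma B2 evaluated
  have hΛV2 : (Lam0 lam0 u n)ᵀ *
      ((evalMat lam0 (pencil A B)).toBlocks₂₁ *
          (lam0 ^ (u+1) • (1 : Matrix (Fin n) (Fin n) F)) +
        (evalMat lam0 (pencil A B)).toBlocks₂₂ * Lam0 lam0 u n) =
      evalMat lam0 (polyOfCoeffs (2*(u+1)) Pc) := by
    rw [Matrix.mul_add, ← Matrix.mul_assoc, ← Matrix.mul_assoc, h21e, h22e, hP0]
    rw [Matrix.smul_mul, Matrix.mul_smul, Matrix.mul_one, smul_smul, ← pow_add, htt]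
    abel
  -- kernel equations
  have heLh : evalMat lam0 (LhatB F u n) =
      Matrix.fromCols 0 (Lp0 lam0 u ⊗ₖ (1 : Matrix (Fin n) (Fin n) F)) := by
    rw [LhatB_eq, evalMat_fromCols, evalMat_zero, evalMat_kronecker, evalMat_Lpen,
      evalMat_one]
  have heNh : evalMat lam0 (NhatB F u n) =
      Matrix.fromCols 0 (H0 lam0 u ⊗ₖ (1 : Matrix (Fin n) (Fin n) F)) := by
    rw [NhatB_eq, evalMat_fromCols, evalMat_zero, evalMat_kronecker, evalMat_Hpen,
      evalMat_one]
  have heΛf : evalMat lam0 (LamFullB F u n) =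
      Matrix.fromRows (lam0 ^ (u+1) • (1 : Matrix (Fin n) (Fin n) F)) (Lam0 lam0 u n) := by
    rw [LamFullB_eq, evalMat_fromRows, evalMat_smul, evalMat_one, evalMat_Lam]
    simp only [eval_pow, eval_X]
  set z1 : (Fin n ⊕ Fin (u+1) × Fin n) → F := fun q => z (Sum.inl q) with hz1def
  set z2 : (Fin u × Fin n) → F := fun p => z (Sum.inr p) with hz2def
  have hzelim : z = Sum.elim z1 z2 := by funext q; cases q <;> rfl
  have hLmat : evalMat lam0 (modBK F u n σ (pencil A B)) =
      Matrix.fromBlocks (evalMat lam0 (pencil A B))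
        (Matrix.fromCols 0 (Lp0 lam0 u ⊗ₖ (1 : Matrix (Fin n) (Fin n) F)))ᵀ
        (σ • Matrix.fromCols 0 (Lp0 lam0 u ⊗ₖ (1 : Matrix (Fin n) (Fin n) F))) 0 := by
    have hdef : modBK F u n σ (pencil A B) =
        Matrix.fromBlocks (pencil A B) (LhatB F u n)ᵀ (σ • LhatB F u n) 0 := rfl
    rw [hdef, evalMat_fromBlocks, evalMat_transpose, evalMat_smulF, heLh, evalMat_zero]
  rw [hLmat, hzelim, Matrix.fromBlocks_mulVec] at hz
  simp only [Sum.elim_comp_inl, Sum.elim_comp_inr] at hz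
  have E1 : (evalMat lam0 (pencil A B)).mulVec z1 +
      ((Matrix.fromCols 0 (Lp0 lam0 u ⊗ₖ (1 : Matrix (Fin n) (Fin n) F)))ᵀ).mulVec z2
      = 0 := by
    funext q
    exact congrFun hz (Sum.inl q)
  have E2 : (Matrix.fromCols (0 : Matrix (Fin u × Fin n) (Fin n) F)
      (Lp0 lam0 u ⊗ₖ (1 : Matrix (Fin n) (Fin n) F))).mulVec z1 = 0 := by
    have h2 : σ • (Matrix.fromCols (0 : Matrix (Fin u × Fin n) (Fin n) F)
        (Lp0 lam0 u ⊗ₖ (1 : Matrix (Fin n) (Fin n) F))).mulVec z1 = 0 := by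
      funext p
      have h := congrFun hz (Sum.inr p)
      simpa [Matrix.zero_mulVec, Matrix.smul_mulVec] using h
    have h3 := congrArg (fun w => σ⁻¹ • w) h2
    simpa [smul_smul, inv_mul_cancel₀ hσ0] using h3
  -- kernel structure of z1
  have hsplit1 : z1 = Sum.elim (fun r => z1 (Sum.inl r)) (fun p => z1 (Sum.inr p)) := by
    funext q; cases q <;> rfl
  have EK : (Lp0 lam0 u ⊗ₖ (1 : Matrix (Fin n) (Fin n) F)).mulVec
      (fun p => z1 (Sum.inr p)) = 0 := by
    rw [hsplit1, Matrix.fromCols_mulVec_sumElim] at E2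
    simpa using E2
  have hrec : ∀ (i : Fin u) (r : Fin n),
      z1 (Sum.inr (i.castSucc, r)) = lam0 * z1 (Sum.inr (i.succ, r)) := by
    intro i r
    have h := congrFun EK (i, r)
    rw [kron_one_mulVec] at h
    simp only [Lp0, Matrix.of_apply] at h
    rw [Lp0_row_sum lam0 i (fun j => z1 (Sum.inr (j, r)))] at h
    have h' := neg_add_eq_zero.mp h
    exact h'
  set x : Fin n → F := fun r => z1 (Sum.inr (Fin.last u, r)) with hxdef
  have hpow : ∀ k, k ≤ u → ∀ r, z1 (Sum.inr (⟨u - k, by omega⟩, r)) = lam0 ^ k * x r := by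
    intro k
    induction k with
    | zero =>
        intro _ r
        have : (⟨u - 0, by omega⟩ : Fin (u+1)) = Fin.last u := by
          apply Fin.ext; simp [Fin.last]
        rw [this]
        simp [hxdef]
    | succ k ih =>
        intro hk r
        have hik : u - (k+1) < u := by omega
        have h1 := hrec ⟨u - (k+1), hik⟩ r
        have hcs : (⟨u - (k+1), hik⟩ : Fin u).castSucc = ⟨u - (k+1), by omega⟩ := by
          apply Fin.ext; simp
        have hsc : (⟨u - (k+1), hik⟩ : Fin u).succ = ⟨u - k, by omega⟩ := by
          apply Fin.ext; simp [Fin.val_succ]; omega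
        rw [hcs, hsc] at h1
        rw [h1, ih (by omega) r]
        ring
  have hvinr : ∀ p : Fin (u+1) × Fin n,
      z1 (Sum.inr p) = lam0 ^ (u - (p.1 : ℕ)) * x p.2 := by
    rintro ⟨j, r⟩
    have h := hpow (u - (j : ℕ)) (by omega) r
    have hj : (⟨u - (u - (j : ℕ)), by omega⟩ : Fin (u+1)) = j := by
      apply Fin.ext; simp; omega
    rw [hj] at h
    exact h
  have hvLam : (fun p => z1 (Sum.inr p)) = (Lam0 lam0 u n).mulVec x := by
    funext p
    rw [Lam0_mulVec]
    exact hvinr p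
  have hz1split : z1 = Sum.elim (fun r => z1 (Sum.inl r)) ((Lam0 lam0 u n).mulVec x) := by
    rw [← hvLam]
    exact hsplit1
  -- upper block of E1 forces y = lam0^t • x
  have hMz1 : (evalMat lam0 (pencil A B)).mulVec z1 =
      Sum.elim
        ((evalMat lam0 (pencil A B)).toBlocks₁₁.mulVec (fun r => z1 (Sum.inl r)) +
          ((evalMat lam0 (pencil A B)).toBlocks₁₂ * Lam0 lam0 u n).mulVec x)
        ((evalMat lam0 (pencil A B)).toBlocks₂₁.mulVec (fun r => z1 (Sum.inl r)) +
          ((evalMat lam0 (pencil A B)).toBlocks₂₂ * Lam0 lam0 u n).mulVec x) := by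
    conv_lhs => rw [hM0, hz1split]
    rw [Matrix.fromBlocks_mulVec]
    simp only [Sum.elim_comp_inl, Sum.elim_comp_inr, Matrix.mulVec_mulVec]
  have E1inl : ∀ r, ((evalMat lam0 (pencil A B)).mulVec z1) (Sum.inl r) = 0 := by
    intro r
    have h0 : ((Matrix.fromCols 0
        (Lp0 lam0 u ⊗ₖ (1 : Matrix (Fin n) (Fin n) F)))ᵀ).mulVec z2 (Sum.inl r) = 0 := by
      rw [Matrix.transpose_fromCols, Matrix.fromRows_mulVec]
      simp
    have h := congrFun E1 (Sum.inl r)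
    simp only [Pi.add_apply, Pi.zero_apply] at h
    rw [h0, add_zero] at h
    exact h
  have hblk1 : (-(Pc (2*(u+1)))).mulVec (fun r => z1 (Sum.inl r)) +
      (lam0 ^ (u+1) • Pc (2*(u+1))).mulVec x = 0 := by
    funext r
    have h := E1inl r
    rw [hMz1] at h
    simp only [Sum.elim_inl] at h
    rw [h11e, h12e] at h
    exact h
  have hyx : (fun r => z1 (Sum.inl r)) = lam0 ^ (u+1) • x := by
    have hinj := Matrix.mulVec_injective_iff_isUnit.mpr
      ((Matrix.isUnit_iff_isUnit_det _).mpr hPd)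
    apply hinj
    have h := hblk1
    rw [Matrix.neg_mulVec, Matrix.smul_mulVec] at h
    have h2 := neg_add_eq_zero.mp h
    rw [h2, Matrix.mulVec_smul]
  have hz1Λf : z1 = (Matrix.fromRows (lam0 ^ (u+1) • (1 : Matrix (Fin n) (Fin n) F))
      (Lam0 lam0 u n)).mulVec x := by
    rw [Matrix.fromRows_mulVec, hz1split, hyx]
    congr 1
    rw [Matrix.smul_mulVec, Matrix.one_mulVec]
  -- P(lam0) x = 0
  have hPx : (evalMat lam0 (polyOfCoeffs (2*(u+1)) Pc)).mulVec x = 0 := by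
    have h := congrArg (fun w => ((Matrix.fromRows (lam0 ^ (u+1) • (1 : Matrix (Fin n) (Fin n) F))
      (Lam0 lam0 u n))ᵀ).mulVec w) E1
    simp only [Matrix.mulVec_add, Matrix.mulVec_zero] at h
    rw [hz1Λf] at h
    simp only [Matrix.mulVec_mulVec] at h
    rw [← Matrix.mul_assoc, hLemA, ← Matrix.transpose_mul, hLhΛf, Matrix.transpose_zero,
      Matrix.zero_mulVec, add_zero] at h
    exact h
  -- the candidate for z2
  have hNMΛ : evalMat lam0 (NhatB F u n) * evalMat lam0 (pencil A B) *
      (Matrix.fromRows (lam0 ^ (u+1) • (1 : Matrix (Fin n) (Fin n) F)) (Lam0 lam0 u n)) =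
      (H0 lam0 u ⊗ₖ (1 : Matrix (Fin n) (Fin n) F)) *
        ((evalMat lam0 (pencil A B)).toBlocks₂₁ *
            (lam0 ^ (u+1) • (1 : Matrix (Fin n) (Fin n) F)) +
          (evalMat lam0 (pencil A B)).toBlocks₂₂ * Lam0 lam0 u n) := by
    rw [Matrix.mul_assoc, hMV, heNh, Matrix.fromCols_mul_fromRows, Matrix.mul_zero,
      zero_add]
  have hLhT_NMΛ : (Matrix.fromCols (0 : Matrix (Fin u × Fin n) (Fin n) F)
        (Lp0 lam0 u ⊗ₖ (1 : Matrix (Fin n) (Fin n) F)))ᵀ *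
        ((H0 lam0 u ⊗ₖ (1 : Matrix (Fin n) (Fin n) F)) *
          ((evalMat lam0 (pencil A B)).toBlocks₂₁ *
              (lam0 ^ (u+1) • (1 : Matrix (Fin n) (Fin n) F)) +
            (evalMat lam0 (pencil A B)).toBlocks₂₂ * Lam0 lam0 u n)) =
      Matrix.fromRows 0
        (-((evalMat lam0 (pencil A B)).toBlocks₂₁ *
              (lam0 ^ (u+1) • (1 : Matrix (Fin n) (Fin n) F)) +
            (evalMat lam0 (pencil A B)).toBlocks₂₂ * Lam0 lam0 u n) +
          EU0 F u n * evalMat lam0 (polyOfCoeffs (2*(u+1)) Pc)) := by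
    rw [Matrix.transpose_fromCols, Matrix.transpose_zero, Matrix.fromRows_mul,
      Matrix.zero_mul]
    congr 1
    rw [← Matrix.mul_assoc, ← Matrix.kroneckerMap_transpose, Matrix.transpose_one,
      ← Matrix.mul_kronecker_mul, Matrix.one_mul, Lp0T_mul_H0 lam0 hu, Matrix.add_kronecker,
      neg_kron, Matrix.one_kronecker_one, Matrix.add_mul, Matrix.neg_mul, Matrix.one_mul,
      EE0_kron, Matrix.mul_assoc, hΛV2]
  -- z2 equals the candidate
  have hLz2 : ((Matrix.fromCols (0 : Matrix (Fin u × Fin n) (Fin n) F)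
      (Lp0 lam0 u ⊗ₖ (1 : Matrix (Fin n) (Fin n) F)))ᵀ).mulVec z2 =
      ((Matrix.fromCols (0 : Matrix (Fin u × Fin n) (Fin n) F)
      (Lp0 lam0 u ⊗ₖ (1 : Matrix (Fin n) (Fin n) F)))ᵀ).mulVec
        ((evalMat lam0 (NhatB F u n) * evalMat lam0 (pencil A B) *
          Matrix.fromRows (lam0 ^ (u+1) • (1 : Matrix (Fin n) (Fin n) F))
            (Lam0 lam0 u n)).mulVec x) := by
    have h1 : ((Matrix.fromCols (0 : Matrix (Fin u × Fin n) (Fin n) F)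
        (Lp0 lam0 u ⊗ₖ (1 : Matrix (Fin n) (Fin n) F)))ᵀ).mulVec
        ((evalMat lam0 (NhatB F u n) * evalMat lam0 (pencil A B) *
          Matrix.fromRows (lam0 ^ (u+1) • (1 : Matrix (Fin n) (Fin n) F))
            (Lam0 lam0 u n)).mulVec x) = -(evalMat lam0 (pencil A B)).mulVec z1 := by
      rw [Matrix.mulVec_mulVec, hNMΛ, hLhT_NMΛ]
      have h2 : (evalMat lam0 (pencil A B)).mulVec z1 =
          (Matrix.fromRows 0 ((evalMat lam0 (pencil A B)).toBlocks₂₁ *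
              (lam0 ^ (u+1) • (1 : Matrix (Fin n) (Fin n) F)) +
            (evalMat lam0 (pencil A B)).toBlocks₂₂ * Lam0 lam0 u n)).mulVec x := by
        rw [hz1Λf, Matrix.mulVec_mulVec, hMV]
      rw [h2, Matrix.fromRows_mulVec, Matrix.fromRows_mulVec, Matrix.add_mulVec, Matrix.neg_mulVec,
        ← Matrix.mulVec_mulVec, hPx, Matrix.mulVec_zero, add_zero, Matrix.zero_mulVec]
      funext q
      cases q <;> simp
    have h4 : ((Matrix.fromCols (0 : Matrix (Fin u × Fin n) (Fin n) F)
        (Lp0 lam0 u ⊗ₖ (1 : Matrix (Fin n) (Fin n) F)))ᵀ).mulVec z2 =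
        -(evalMat lam0 (pencil A B)).mulVec z1 := by
      exact eq_neg_of_add_eq_zero_right E1
    rw [h1, h4]
  have hz2w : z2 = (evalMat lam0 (NhatB F u n) * evalMat lam0 (pencil A B) *
      Matrix.fromRows (lam0 ^ (u+1) • (1 : Matrix (Fin n) (Fin n) F))
        (Lam0 lam0 u n)).mulVec x := by
    have hdiff : ((Matrix.fromCols (0 : Matrix (Fin u × Fin n) (Fin n) F)
        (Lp0 lam0 u ⊗ₖ (1 : Matrix (Fin n) (Fin n) F)))ᵀ).mulVec
        (z2 - (evalMat lam0 (NhatB F u n) * evalMat lam0 (pencil A B) *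
          Matrix.fromRows (lam0 ^ (u+1) • (1 : Matrix (Fin n) (Fin n) F))
            (Lam0 lam0 u n)).mulVec x) = 0 := by
      rw [Matrix.mulVec_sub, hLz2, sub_self]
    have hker : ∀ v : Fin u × Fin n → F,
        ((Matrix.fromCols (0 : Matrix (Fin u × Fin n) (Fin n) F)
          (Lp0 lam0 u ⊗ₖ (1 : Matrix (Fin n) (Fin n) F)))ᵀ).mulVec v = 0 → v = 0 := by
      intro v hv
      rw [Matrix.transpose_fromCols, Matrix.transpose_zero, Matrix.fromRows_mulVec] at hv
      have hcomp : ∀ (j : Fin (u+1)) (c : Fin n), ∑ i, Lp0 lam0 u i j * v (i, c) = 0 := by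
        intro j c
        have h := congrFun hv (Sum.inr (j, c))
        simp only [Sum.elim_inr, Pi.zero_apply] at h
        rw [kron_one_transpose_mulVec] at h
        exact h
      have hind : ∀ k (hk : k < u) (c : Fin n), v (⟨k, hk⟩, c) = 0 := by
        intro k
        induction k using Nat.strong_induction_on with
        | _ k ih =>
          intro hk c
          have h := hcomp ⟨k, by omega⟩ c
          simp only [Lp0, Matrix.of_apply] at h
          rw [Lp0_col_sum lam0 ⟨k, by omega⟩ (fun i => v (i, c))] at h
          simp only at h
          rw [dif_pos hk] at h
          by_cases h1 : 1 ≤ k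
          · rw [dif_pos h1, ih (k-1) (by omega) (by omega) c] at h
            simpa using h
          · rw [dif_neg h1] at h
            simpa using h
      funext p
      obtain ⟨i, c⟩ := p
      simpa using hind i.1 i.2 c
    have hv0 := hker _ hdiff
    exact sub_eq_zero.mp hv0
  -- conclusion
  refine ⟨x, hPx, ?_⟩
  rw [evalMat_fromRows, evalMat_mul, evalMat_mul, heΛf, Matrix.fromRows_mulVec, hzelim, hz2w,
    hz1Λf]
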